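/- Let f : ℂ³ × ℂ³ × sl₃(ℂ) → ℂ², f(y, x, M) = (ᵗy·x, ᵗy·M·x), where sl₃(ℂ) is the space of traceless 3×3 complex matrices. Let (y, x, M) be a point with f(y,x,M) = (0,0) and (y,x,M) ≠ 0. Then the differential of f at (y, x, M) is surjective if and only if neither of the following holds: (a) x = 0 and the 2×3 matrix with rows ᵗy and ᵗy·M has rank ≤ 1; (b) y = 0 and the 2×3 matrix with rows ᵗx and ᵗx·ᵗM has rank ≤ 1. -/

import Mathlib

open Matrix

lemma auxRankSurj (B : Matrix (Fin 2) (Fin 3) ℂ) :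
    ¬ B.rank ≤ 1 ↔
      Function.Surjective (fun v : Fin 3 → ℂ => ((B.mulVec v 0, B.mulVec v 1) : ℂ × ℂ)) := by
  have hle : B.rank ≤ 2 := by
    simpa using B.rank_le_card_height
  have hsurj : Function.Surjective B.mulVec ↔ B.rank = 2 := by
    constructor
    · intro h
      have htop : LinearMap.range B.mulVecLin = ⊤ :=
        LinearMap.range_eq_top.mpr (by exact h)
      rw [Matrix.rank, htop, finrank_top, Module.finrank_fin_fun]
    · intro h
      have htop : LinearMap.range B.mulVecLin = ⊤ := by
        apply Submodule.eq_top_of_finrank_eq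
        rw [← Matrix.rank, h, Module.finrank_fin_fun]
      have := LinearMap.range_eq_top.mp htop
      exact this
  constructor
  · intro h
    have h2 : B.rank = 2 := by omega
    have hs := hsurj.mpr h2
    rintro ⟨a, b⟩
    obtain ⟨v, hv⟩ := hs ![a, b]
    exact ⟨v, by simp [hv]⟩
  · intro h
    have hs : Function.Surjective B.mulVec := by
      intro w
      obtain ⟨v, hv⟩ := h (w 0, w 1)
      refine ⟨v, funext fun k => ?_⟩
      fin_cases k
      · exact congrArg Prod.fst hv
      · exact congrArg Prod.snd hv
    have := hsurj.mp hs
    omega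

lemma auxDotStd (y x : Fin 3 → ℂ) (i j : Fin 3) (c : ℂ) :
    y ⬝ᵥ (Matrix.single i j c).mulVec x = y i * (c * x j) := by
  rw [Matrix.single_mulVec]
  simp [dotProduct, Function.update_apply, mul_ite, Finset.sum_ite_eq']

theorem stmt9 (y x : Fin 3 → ℂ) (M : Matrix (Fin 3) (Fin 3) ℂ) (hM : M.trace = 0)
    (h1 : y ⬝ᵥ x = 0) (h2 : y ⬝ᵥ M.mulVec x = 0)
    (hne : ¬(y = 0 ∧ x = 0 ∧ M = 0)) :
    Function.Surjective
        (fun p : (Fin 3 → ℂ) × (Fin 3 → ℂ) × {N : Matrix (Fin 3) (Fin 3) ℂ // N.trace = 0} =>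
          ((p.1 ⬝ᵥ x + y ⬝ᵥ p.2.1,
            p.1 ⬝ᵥ M.mulVec x + y ⬝ᵥ (p.2.2 : Matrix (Fin 3) (Fin 3) ℂ).mulVec x
              + y ⬝ᵥ M.mulVec p.2.1) : ℂ × ℂ)) ↔
      ¬((x = 0 ∧ (Matrix.of ![y, y ᵥ* M]).rank ≤ 1) ∨
        (y = 0 ∧ (Matrix.of ![x, M.mulVec x]).rank ≤ 1)) := by
  by_cases hx : x = 0
  · subst hx
    by_cases hy : y = 0
    · subst hy
      constructor
      · intro hs
        exfalso
        obtain ⟨p, hp⟩ := hs (1, 0)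
        simp only [zero_dotProduct, dotProduct_zero, Matrix.mulVec_zero,
          add_zero, zero_add] at hp
        exact one_ne_zero (congrArg Prod.fst hp).symm
      · intro h
        exfalso
        apply h
        right
        refine ⟨rfl, ?_⟩
        have : (Matrix.of ![(0 : Fin 3 → ℂ), M.mulVec 0]) = 0 := by
          ext i j; fin_cases i <;> simp
        rw [this]
        simp
    · -- x = 0, y ≠ 0
      have hme : ∀ v : Fin 3 → ℂ,
          (Matrix.of ![y, y ᵥ* M]).mulVec v
            = ![y ⬝ᵥ v, y ⬝ᵥ M.mulVec v] := by
        intro v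
        funext k
        fin_cases k
        · simp [Matrix.mulVec]
        · simp [Matrix.mulVec, Matrix.dotProduct_mulVec]
      have hmain : Function.Surjective
          (fun p : (Fin 3 → ℂ) × (Fin 3 → ℂ) × {N : Matrix (Fin 3) (Fin 3) ℂ // N.trace = 0} =>
            ((p.1 ⬝ᵥ (0 : Fin 3 → ℂ) + y ⬝ᵥ p.2.1,
              p.1 ⬝ᵥ M.mulVec 0 + y ⬝ᵥ (p.2.2 : Matrix (Fin 3) (Fin 3) ℂ).mulVec 0
                + y ⬝ᵥ M.mulVec p.2.1) : ℂ × ℂ))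
          ↔ ¬ (Matrix.of ![y, y ᵥ* M]).rank ≤ 1 := by
        rw [auxRankSurj]
        constructor
        · intro hs z
          obtain ⟨p, hp⟩ := hs z
          refine ⟨p.2.1, ?_⟩
          simp only [Matrix.mulVec_zero, dotProduct_zero, zero_add, add_zero] at hp
          simp only [hme]
          simpa using hp
        · intro h z
          obtain ⟨v, hv⟩ := h z
          refine ⟨(0, v, ⟨0, by simp⟩), ?_⟩
          simp only [hme] at hv
          simpa using hv
      rw [hmain]
      simp [hy]
  · by_cases hy : y = 0
    · -- y = 0, x ≠ 0
      subst hy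
      have hme : ∀ v : Fin 3 → ℂ,
          (Matrix.of ![x, M.mulVec x]).mulVec v
            = ![v ⬝ᵥ x, v ⬝ᵥ M.mulVec x] := by
        intro v
        funext k
        fin_cases k
        · simp [Matrix.mulVec, dotProduct_comm]
        · simp [Matrix.mulVec, dotProduct_comm]
          congr 1; funext j; exact dotProduct_comm _ _
      have hmain : Function.Surjective
          (fun p : (Fin 3 → ℂ) × (Fin 3 → ℂ) × {N : Matrix (Fin 3) (Fin 3) ℂ // N.trace = 0} =>
            ((p.1 ⬝ᵥ x + (0 : Fin 3 → ℂ) ⬝ᵥ p.2.1,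
              p.1 ⬝ᵥ M.mulVec x + (0 : Fin 3 → ℂ) ⬝ᵥ (p.2.2 : Matrix (Fin 3) (Fin 3) ℂ).mulVec x
                + (0 : Fin 3 → ℂ) ⬝ᵥ M.mulVec p.2.1) : ℂ × ℂ))
          ↔ ¬ (Matrix.of ![x, M.mulVec x]).rank ≤ 1 := by
        rw [auxRankSurj]
        constructor
        · intro hs z
          obtain ⟨p, hp⟩ := hs z
          refine ⟨p.1, ?_⟩
          simp only [zero_dotProduct, add_zero] at hp
          simp only [hme]
          simpa using hp
        · intro h z
          obtain ⟨v, hv⟩ := h z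
          refine ⟨(v, 0, ⟨0, by simp⟩), ?_⟩
          simp only [hme] at hv
          simpa using hv
      rw [hmain]
      simp [hx]
    · -- x ≠ 0, y ≠ 0 : always surjective
      have hRHS : ¬((x = 0 ∧ (Matrix.of ![y, y ᵥ* M]).rank ≤ 1) ∨
          (y = 0 ∧ (Matrix.of ![x, M.mulVec x]).rank ≤ 1)) := by
        rintro (⟨h, -⟩ | ⟨h, -⟩)
        · exact hx h
        · exact hy h
      refine iff_of_true ?_ hRHS
      obtain ⟨i, hi⟩ : ∃ i, y i ≠ 0 := by
        by_contra h; push_neg at h; exact hy (funext h)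
      obtain ⟨j, hj⟩ : ∃ j, x j ≠ 0 := by
        by_contra h; push_neg at h; exact hx (funext h)
      rintro ⟨a, b⟩
      set ξ : Fin 3 → ℂ := Pi.single i (a / y i) with hξ
      have hyξ : y ⬝ᵥ ξ = a := by
        rw [hξ, dotProduct_single]
        field_simp
      set c : ℂ := b - y ⬝ᵥ M.mulVec ξ with hc
      set A : Matrix (Fin 3) (Fin 3) ℂ := Matrix.single i j (c / (y i * x j)) with hA
      set N : Matrix (Fin 3) (Fin 3) ℂ := A - (A.trace / 3) • 1 with hN
      have hNtr : N.trace = 0 := by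
        rw [hN]
        simp [Matrix.trace_sub, Matrix.trace_smul]
      have hyNx : y ⬝ᵥ N.mulVec x = c := by
        rw [hN, Matrix.sub_mulVec, dotProduct_sub, Matrix.smul_mulVec,
          Matrix.one_mulVec, dotProduct_smul, h1, hA, auxDotStd]
        field_simp
        ring
      refine ⟨(0, ξ, ⟨N, hNtr⟩), ?_⟩
      simp only [zero_dotProduct, zero_add, hyξ, hyNx]
      rw [hc]
      ring_nf
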